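/- The measures satisfy 0 ≤ ρ² ≤ 1 and 0 ≤ λ² ≤ 1, where ρ² = E[(P(X) − μ_Y)²]/var(Y) and λ² = 1 − E[(P(X) − m(X))²]/E[(Y − m(X))²], with P(X) the linear correction of m(X). -/

import Mathlib

open MeasureTheory ProbabilityTheory

section Aux
variable {Ω : Type*} [MeasurableSpace Ω] {μ : Measure Ω} [IsProbabilityMeasure μ]

omit [IsProbabilityMeasure μ] in
lemma aux_int_mul {f g : Ω → ℝ} (hf : MemLp f 2 μ) (hg : MemLp g 2 μ) :
    Integrable (fun ω => f ω * g ω) μ := by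
  have h : (1:ENNReal)/1 = 1/2 + 1/2 := by
    rw [ENNReal.div_add_div_same, one_div_one, one_add_one_eq_two]; exact (ENNReal.div_self two_ne_zero ENNReal.ofNat_ne_top).symm
  have := memLp_one_iff_integrable.mp (hg.smul hf (r := 1))
  simpa [smul_eq_mul, mul_comm, Pi.mul_def] using this

omit [IsProbabilityMeasure μ] in
lemma aux_expand {f g : Ω → ℝ} (hf : MemLp f 2 μ) (hg : MemLp g 2 μ) (t : ℝ) :
    ∫ ω, (f ω - t * g ω) ^ 2 ∂μ
      = (∫ ω, f ω ^ 2 ∂μ) - 2 * t * (∫ ω, f ω * g ω ∂μ) + t ^ 2 * ∫ ω, g ω ^ 2 ∂μ := by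
  have h1 : Integrable (fun ω => f ω ^ 2) μ := hf.integrable_sq
  have h2 : Integrable (fun ω => f ω * g ω) μ := aux_int_mul hf hg
  have h3 : Integrable (fun ω => g ω ^ 2) μ := hg.integrable_sq
  have : (fun ω => (f ω - t * g ω) ^ 2)
      = fun ω => f ω ^ 2 - 2 * t * (f ω * g ω) + t ^ 2 * g ω ^ 2 := by
    funext ω; ring
  rw [this, integral_add (by exact (h1.sub (h2.const_mul _))) (h3.const_mul _),
    integral_sub h1 (h2.const_mul _), integral_const_mul, integral_const_mul]

lemma aux_sq_int {f : Ω → ℝ} (hf : MemLp f 2 μ) (hf0 : ∫ ω, f ω ∂μ = 0) (s d : ℝ) :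
    ∫ ω, (s * f ω + d) ^ 2 ∂μ = s ^ 2 * (∫ ω, f ω ^ 2 ∂μ) + d ^ 2 := by
  have h1 : Integrable (fun ω => f ω ^ 2) μ := hf.integrable_sq
  have h2 : Integrable f μ := hf.integrable one_le_two
  have : (fun ω => (s * f ω + d) ^ 2)
      = fun ω => s ^ 2 * f ω ^ 2 + (2 * s * d * f ω + d ^ 2) := by
    funext ω; ring
  have h4 : Integrable (fun ω => 2 * s * d * f ω + d ^ 2) μ := by
    exact (h2.const_mul _).add (integrable_const _)
  rw [this, integral_add (h1.const_mul _) h4,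
    integral_add (h2.const_mul _) (integrable_const _), integral_const_mul,
    integral_const_mul, hf0, integral_const]
  simp

end Aux

/-- The linearly corrected prediction function
`P(X) = μ_Y + (cov(Y, m(X))/var(m(X))) ⬝ (m(X) − E[m(X)])`. -/
noncomputable def linCorrect {Ω : Type*} [MeasurableSpace Ω] (μ : Measure Ω)
    (Y M : Ω → ℝ) (ω : Ω) : ℝ :=
  (∫ x, Y x ∂μ) +
    ((∫ x, (Y x - ∫ y, Y y ∂μ) * (M x - ∫ y, M y ∂μ) ∂μ) / variance M μ) *
      (M ω - ∫ y, M y ∂μ)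

/-- 0 ≤ ρ² ≤ 1 and 0 ≤ λ² ≤ 1. -/
theorem stmt8 {Ω : Type*} [MeasurableSpace Ω] (μ : Measure Ω) [IsProbabilityMeasure μ]
    (Y M : Ω → ℝ) (hY : MemLp Y 2 μ) (hM : MemLp M 2 μ)
    (hvY : 0 < variance Y μ) (hv : 0 < variance M μ)
    (hYM : 0 < ∫ ω, (Y ω - M ω) ^ 2 ∂μ)
    (rhosq lamsq : ℝ)
    (hrho : rhosq = (∫ ω, (linCorrect μ Y M ω - ∫ y, Y y ∂μ) ^ 2 ∂μ) / variance Y μ)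
    (hlam : lamsq = 1 -
      (∫ ω, (linCorrect μ Y M ω - M ω) ^ 2 ∂μ) / ∫ ω, (Y ω - M ω) ^ 2 ∂μ) :
    0 ≤ rhosq ∧ rhosq ≤ 1 ∧ 0 ≤ lamsq ∧ lamsq ≤ 1 := by
  set a : ℝ := ∫ ω, Y ω ∂μ with ha
  set b : ℝ := ∫ ω, M ω ∂μ with hb
  set Y' : Ω → ℝ := fun ω => Y ω - a with hY'
  set M' : Ω → ℝ := fun ω => M ω - b with hM'
  have hY2 : MemLp Y' 2 μ := hY.sub (memLp_const a)
  have hM2 : MemLp M' 2 μ := hM.sub (memLp_const b)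
  have hY'0 : ∫ ω, Y' ω ∂μ = 0 := by
    simp [hY', integral_sub (hY.integrable one_le_two) (integrable_const a), ← ha]
  have hM'0 : ∫ ω, M' ω ∂μ = 0 := by
    simp [hM', integral_sub (hM.integrable one_le_two) (integrable_const b), ← hb]
  set cov : ℝ := ∫ ω, Y' ω * M' ω ∂μ with hcov
  set vY : ℝ := variance Y μ
  set vM : ℝ := variance M μ
  -- variance in integral form
  have hvarY : vY = ∫ ω, Y' ω ^ 2 ∂μ := by
    rw [show vY = variance Y μ from rfl, variance_eq_integral hY.1.aemeasurable]
  have hvarM : vM = ∫ ω, M' ω ^ 2 ∂μ := by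
    rw [show vM = variance M μ from rfl, variance_eq_integral hM.1.aemeasurable]
  set c : ℝ := cov / vM with hc
  have hcvM : c * vM = cov := div_mul_cancel₀ _ hv.ne'
  -- Cauchy–Schwarz: cov² ≤ vY * vM  via 0 ≤ ∫ (Y' - c M')²
  have hCS : c ^ 2 * vM ≤ vY := by
    have h0 : 0 ≤ ∫ ω, (Y' ω - c * M' ω) ^ 2 ∂μ :=
      integral_nonneg fun ω => sq_nonneg _
    rw [aux_expand hY2 hM2 c, ← hvarY, ← hvarM, ← hcov] at h0
    have h1 : c * cov = c ^ 2 * vM := by rw [← hcvM]; ring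
    linarith
  -- P - a = c * M'
  have hP : ∀ ω, linCorrect μ Y M ω - a = c * M' ω := by
    intro ω; simp only [linCorrect, hc, hcov, hY', hM', ← ha, ← hb]; ring
  -- ρ² computations
  have hrho_int : ∫ ω, (linCorrect μ Y M ω - a) ^ 2 ∂μ = c ^ 2 * vM := by
    have : (fun ω => (linCorrect μ Y M ω - a) ^ 2) = fun ω => (c * M' ω + 0) ^ 2 := by
      funext ω; rw [hP ω]; ring
    rw [this, aux_sq_int hM2 hM'0, ← hvarM]; ring
  have hrho' : rhosq = c ^ 2 * vM / vY := by rw [hrho, hrho_int]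
  have h1 : 0 ≤ rhosq := by
    rw [hrho']; positivity
  have h2 : rhosq ≤ 1 := by
    rw [hrho']; exact div_le_one_of_le₀ hCS hvY.le
  -- λ² computations
  have hPM : ∫ ω, (linCorrect μ Y M ω - M ω) ^ 2 ∂μ = (c - 1) ^ 2 * vM + (a - b) ^ 2 := by
    have : (fun ω => (linCorrect μ Y M ω - M ω) ^ 2)
        = fun ω => ((c - 1) * M' ω + (a - b)) ^ 2 := by
      funext ω
      have h := hP ω
      have : linCorrect μ Y M ω - M ω = (c - 1) * M' ω + (a - b) := by
        have : linCorrect μ Y M ω = c * M' ω + a := by linarith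
        rw [this]; simp only [hM']; ring
      rw [this]
    rw [this, aux_sq_int hM2 hM'0, ← hvarM]
  have hYMint : ∫ ω, (Y ω - M ω) ^ 2 ∂μ
      = (vY - 2 * cov + vM) + (a - b) ^ 2 := by
    have hsub : MemLp (fun ω => Y' ω - M' ω) 2 μ := hY2.sub hM2
    have hsub0 : ∫ ω, (Y' ω - M' ω) ∂μ = 0 := by
      rw [integral_sub (hY2.integrable one_le_two) (hM2.integrable one_le_two), hY'0, hM'0]
      ring
    have e1 : (fun ω => (Y ω - M ω) ^ 2)
        = fun ω => (1 * (Y' ω - M' ω) + (a - b)) ^ 2 := by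
      funext ω; simp only [hY', hM']; ring
    have e2 : ∫ ω, (Y' ω - M' ω) ^ 2 ∂μ = vY - 2 * cov + vM := by
      have : (fun ω => (Y' ω - M' ω) ^ 2) = fun ω => (Y' ω - 1 * M' ω) ^ 2 := by
        funext ω; ring
      rw [this, aux_expand hY2 hM2 1, ← hvarY, ← hvarM, ← hcov]; ring
    rw [e1, aux_sq_int hsub hsub0, e2]; ring
  have hnum_nonneg : 0 ≤ ∫ ω, (linCorrect μ Y M ω - M ω) ^ 2 ∂μ :=
    integral_nonneg fun ω => sq_nonneg _
  have h4 : lamsq ≤ 1 := by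
    rw [hlam]
    have : 0 ≤ (∫ ω, (linCorrect μ Y M ω - M ω) ^ 2 ∂μ) / ∫ ω, (Y ω - M ω) ^ 2 ∂μ :=
      div_nonneg hnum_nonneg hYM.le
    linarith
  have h3 : 0 ≤ lamsq := by
    rw [hlam]
    have hle : (∫ ω, (linCorrect μ Y M ω - M ω) ^ 2 ∂μ) ≤ ∫ ω, (Y ω - M ω) ^ 2 ∂μ := by
      rw [hPM, hYMint]
      nlinarith [hcvM, hCS]
    have := div_le_one_of_le₀ hle hYM.le
    linarith
  exact ⟨h1, h2, h3, h4⟩
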